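/- For every natural number k, the following identity of polynomials in ℤ[q] holds: Σ_{i=0}^{⌊3k/2⌋} (−1)^i · q^(i(i−1)/2) · [3k−i choose i]_q = (−1)^k · q^(k(3k−1)/2), where [m choose n]_q denotes the Gaussian (q-)binomial coefficient. -/
import Mathlib


open Polynomial Finset

private lemma Dne' (k : ℕ) : (∏ i ∈ Finset.range k, (1 - (X : Polynomial ℤ) ^ (i+1))) ≠ 0 := by
  apply Finset.prod_ne_zero_iff.mpr
  intro i _ h
  have h2 : (1 - (X:Polynomial ℤ)^(i+1)).coeff 0 = 0 := by rw [h]; simp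
  simp [coeff_one, coeff_X_pow] at h2

private lemma Gdiag' (G : ℕ → ℕ → Polynomial ℤ)
    (hG : ∀ m k : ℕ, k ≤ m →
      G m k * ∏ i ∈ Finset.range k, (1 - (X : Polynomial ℤ) ^ (i + 1)) =
        ∏ i ∈ Finset.range k, (1 - (X : Polynomial ℤ) ^ (m - i))) (m : ℕ) : G m m = 1 := by
  have h := hG m m le_rfl
  have h2 : ∏ i ∈ Finset.range m, (1 - (X : Polynomial ℤ) ^ (m - i)) =
      ∏ i ∈ Finset.range m, (1 - (X : Polynomial ℤ) ^ (i+1)) := by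
    rw [← Finset.prod_range_reflect]
    refine Finset.prod_congr rfl fun i hi => ?_
    simp only [Finset.mem_range] at hi
    have h3 : m - (m - 1 - i) = i + 1 := by omega
    rw [h3]
  rw [h2] at h
  apply mul_right_cancel₀ (Dne' m)
  rw [h, one_mul]

private lemma Gzero' (G : ℕ → ℕ → Polynomial ℤ)
    (hG : ∀ m k : ℕ, k ≤ m →
      G m k * ∏ i ∈ Finset.range k, (1 - (X : Polynomial ℤ) ^ (i + 1)) =
        ∏ i ∈ Finset.range k, (1 - (X : Polynomial ℤ) ^ (m - i))) (m : ℕ) : G m 0 = 1 := by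
  have h := hG m 0 (Nat.zero_le _)
  simpa using h

private lemma pascalB' (G : ℕ → ℕ → Polynomial ℤ)
    (hG : ∀ m k : ℕ, k ≤ m →
      G m k * ∏ i ∈ Finset.range k, (1 - (X : Polynomial ℤ) ^ (i + 1)) =
        ∏ i ∈ Finset.range k, (1 - (X : Polynomial ℤ) ^ (m - i)))
    (hG0 : ∀ m k : ℕ, m < k → G m k = 0) (m k : ℕ) :
    G (m+1) (k+1) = X^(k+1) * G m (k+1) + G m k := by
  rcases lt_trichotomy m k with h|h|h
  · rw [hG0 _ _ (by omega), hG0 _ _ (by omega), hG0 _ _ h]; ring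
  · subst h
    rw [Gdiag' G hG, Gdiag' G hG, hG0 m (m+1) (by omega)]; ring
  · apply mul_right_cancel₀ (Dne' (k+1))
    have e1 := hG (m+1) (k+1) (by omega)
    have e2 := hG m (k+1) (by omega)
    have e3 := hG m k (by omega)
    have hD : (∏ i ∈ Finset.range (k+1), (1 - (X:Polynomial ℤ)^(i+1))) =
        (∏ i ∈ Finset.range k, (1-(X:Polynomial ℤ)^(i+1))) * (1 - X^(k+1)) :=
      Finset.prod_range_succ _ _
    rw [e1, add_mul, mul_assoc, e2, hD, ← mul_assoc (G m k), e3]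
    rw [Finset.prod_range_succ' (fun i => 1 - (X:Polynomial ℤ)^(m+1-i)),
        Finset.prod_range_succ]
    simp only [Nat.add_sub_add_right, Nat.sub_zero]
    have hx : (X:Polynomial ℤ)^(k+1) * X^(m-k) = X^(m+1) := by
      rw [← pow_add]; congr 1; omega
    linear_combination (∏ i ∈ Finset.range k, (1 - (X:Polynomial ℤ)^(m-i))) * hx

private lemma pascalA' (G : ℕ → ℕ → Polynomial ℤ)
    (hG : ∀ m k : ℕ, k ≤ m →
      G m k * ∏ i ∈ Finset.range k, (1 - (X : Polynomial ℤ) ^ (i + 1)) =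
        ∏ i ∈ Finset.range k, (1 - (X : Polynomial ℤ) ^ (m - i)))
    (hG0 : ∀ m k : ℕ, m < k → G m k = 0) (m k : ℕ) :
    G (m+1) (k+1) = G m (k+1) + X^(m-k) * G m k := by
  rcases lt_trichotomy m k with h|h|h
  · rw [hG0 _ _ (by omega), hG0 _ _ (by omega), hG0 _ _ h]; ring
  · subst h
    rw [Gdiag' G hG, Gdiag' G hG, hG0 m (m+1) (by omega)]
    simp
  · apply mul_right_cancel₀ (Dne' (k+1))
    have e1 := hG (m+1) (k+1) (by omega)
    have e2 := hG m (k+1) (by omega)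
    have e3 := hG m k (by omega)
    have hD : (∏ i ∈ Finset.range (k+1), (1 - (X:Polynomial ℤ)^(i+1))) =
        (∏ i ∈ Finset.range k, (1-(X:Polynomial ℤ)^(i+1))) * (1 - X^(k+1)) :=
      Finset.prod_range_succ _ _
    rw [e1, add_mul, e2, hD, mul_assoc (X^(m-k)), ← mul_assoc (G m k), e3]
    rw [Finset.prod_range_succ' (fun i => 1 - (X:Polynomial ℤ)^(m+1-i)),
        Finset.prod_range_succ]
    simp only [Nat.add_sub_add_right, Nat.sub_zero]
    have hx : (X:Polynomial ℤ)^(m-k) * X^(k+1) = X^(m+1) := by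
      rw [← pow_add]; congr 1; omega
    linear_combination (∏ i ∈ Finset.range k, (1 - (X:Polynomial ℤ)^(m-i))) * hx

private noncomputable def Ss (G : ℕ → ℕ → Polynomial ℤ) (n : ℕ) : Polynomial ℤ :=
  ∑ i ∈ Finset.range (n+1), (-1:Polynomial ℤ)^i * X^(i*(i-1)/2) * G (n-i) i
private noncomputable def Ts (G : ℕ → ℕ → Polynomial ℤ) (n : ℕ) : Polynomial ℤ :=
  ∑ i ∈ Finset.range (n+1), (-1:Polynomial ℤ)^i * X^(i*(i+1)/2) * G (n-i) i

private lemma hSrec (G : ℕ → ℕ → Polynomial ℤ)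
    (hG : ∀ m k : ℕ, k ≤ m →
      G m k * ∏ i ∈ Finset.range k, (1 - (X : Polynomial ℤ) ^ (i + 1)) =
        ∏ i ∈ Finset.range k, (1 - (X : Polynomial ℤ) ^ (m - i)))
    (hG0 : ∀ m k : ℕ, m < k → G m k = 0) (n : ℕ) :
    Ss G (n+2) = Ts G (n+1) - Ts G n := by
  unfold Ss Ts
  rw [Finset.sum_range_succ' (fun i => (-1:Polynomial ℤ)^i * X^(i*(i-1)/2) * G ((n+2)-i) i) (n+2)]
  rw [Finset.sum_range_succ]
  rw [Finset.sum_range_succ' (fun i => (-1:Polynomial ℤ)^i * X^(i*(i+1)/2) * G ((n+1)-i) i) (n+1)]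
  have z1 : G (n + 2 - (n + 1 + 1)) (n + 1 + 1) = 0 := hG0 _ _ (by omega)
  rw [z1, Gzero' G hG, Gzero' G hG]
  have hterm : ∀ x ∈ Finset.range (n+1),
      (-1:Polynomial ℤ)^(x+1) * X^((x+1)*(x+1-1)/2) * G (n+2-(x+1)) (x+1) =
      (-1:Polynomial ℤ)^(x+1) * X^((x+1)*(x+1+1)/2) * G (n+1-(x+1)) (x+1)
        - (-1:Polynomial ℤ)^x * X^(x*(x+1)/2) * G (n-x) x := by
    intro x hx
    simp only [Finset.mem_range] at hx
    have hm : n + 2 - (x+1) = (n - x) + 1 := by omega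
    have hm2 : n + 1 - (x+1) = n - x := by omega
    rw [hm, hm2, pascalB' G hG hG0 (n-x) x]
    rw [show (x+1)*(x+1-1)/2 = x*(x+1)/2 from by rw [Nat.add_sub_cancel, Nat.mul_comm]]
    have hp : (X:Polynomial ℤ)^(x*(x+1)/2) * X^(x+1) = X^((x+1)*(x+1+1)/2) := by
      rw [← pow_add]; congr 1
      have h2 : 2 ∣ x*(x+1) := (Nat.even_mul_succ_self x).two_dvd
      have e : (x+1)*(x+1+1) = x*(x+1) + 2*(x+1) := by ring
      omega
    linear_combination ((-1:Polynomial ℤ)^(x+1) * G (n-x) (x+1)) * hp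
  rw [Finset.sum_congr rfl hterm, Finset.sum_sub_distrib]
  ring

private lemma hTrec (G : ℕ → ℕ → Polynomial ℤ)
    (hG : ∀ m k : ℕ, k ≤ m →
      G m k * ∏ i ∈ Finset.range k, (1 - (X : Polynomial ℤ) ^ (i + 1)) =
        ∏ i ∈ Finset.range k, (1 - (X : Polynomial ℤ) ^ (m - i)))
    (hG0 : ∀ m k : ℕ, m < k → G m k = 0) (n : ℕ) :
    Ts G (n+2) = Ts G (n+1) - X^(n+1) * Ss G n := by
  unfold Ss Ts
  rw [Finset.sum_range_succ' (fun i => (-1:Polynomial ℤ)^i * X^(i*(i+1)/2) * G ((n+2)-i) i) (n+2)]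
  rw [Finset.sum_range_succ]
  rw [Finset.sum_range_succ' (fun i => (-1:Polynomial ℤ)^i * X^(i*(i+1)/2) * G ((n+1)-i) i) (n+1)]
  have z1 : G (n + 2 - (n + 1 + 1)) (n + 1 + 1) = 0 := hG0 _ _ (by omega)
  rw [z1, Gzero' G hG, Gzero' G hG]
  have hterm : ∀ x ∈ Finset.range (n+1),
      (-1:Polynomial ℤ)^(x+1) * X^((x+1)*(x+1+1)/2) * G (n+2-(x+1)) (x+1) =
      (-1:Polynomial ℤ)^(x+1) * X^((x+1)*(x+1+1)/2) * G (n+1-(x+1)) (x+1)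
        - X^(n+1) * ((-1:Polynomial ℤ)^x * X^(x*(x-1)/2) * G (n-x) x) := by
    intro x hx
    simp only [Finset.mem_range] at hx
    have hm : n + 2 - (x+1) = (n - x) + 1 := by omega
    have hm2 : n + 1 - (x+1) = n - x := by omega
    rw [hm, hm2, pascalA' G hG hG0 (n-x) x]
    rcases le_or_gt (2*x) n with hc | hc
    · have e : (x+1)*(x+1+1) = x*(x-1) + 4*x + 2 := by
        rcases x with _|y
        · norm_num
        · simp only [Nat.add_sub_cancel]; ring
      have e2 : x*(x+1) = x*(x-1) + 2*x := by
        rcases x with _|y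
        · norm_num
        · simp only [Nat.add_sub_cancel]; ring
      have h2 : 2 ∣ x*(x+1) := (Nat.even_mul_succ_self x).two_dvd
      have hp : (X:Polynomial ℤ)^((x+1)*(x+1+1)/2) * X^((n-x)-x) =
          X^(n+1) * X^(x*(x-1)/2) := by
        rw [← pow_add, ← pow_add]; congr 1; omega
      linear_combination ((-1:Polynomial ℤ)^(x+1) * G (n-x) x) * hp
    · rw [hG0 (n-x) x (by omega)]
      ring
  rw [Finset.sum_congr rfl hterm, Finset.sum_sub_distrib, Finset.mul_sum]
  ring

private lemma Sform (G : ℕ → ℕ → Polynomial ℤ)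
    (hG : ∀ m k : ℕ, k ≤ m →
      G m k * ∏ i ∈ Finset.range k, (1 - (X : Polynomial ℤ) ^ (i + 1)) =
        ∏ i ∈ Finset.range k, (1 - (X : Polynomial ℤ) ^ (m - i)))
    (hG0 : ∀ m k : ℕ, m < k → G m k = 0) (k : ℕ) :
    Ss G (3*k) = (-1:Polynomial ℤ)^k * X^(k*(3*k-1)/2) := by
  have key : ∀ n, Ss G (n+3) = -(X^(n+1)) * Ss G n := by
    intro n
    have h1 : Ss G (n+1+2) = Ts G (n+1+1) - Ts G (n+1) := hSrec G hG hG0 (n+1)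
    have h2 : Ts G (n+2) = Ts G (n+1) - X^(n+1) * Ss G n := hTrec G hG hG0 n
    have h3 : n+1+2 = n+3 := by omega
    have h4 : n+1+1 = n+2 := by omega
    rw [h3, h4] at h1
    rw [h1, h2]
    ring
  induction k with
  | zero =>
    simp only [Nat.mul_zero, Nat.zero_mul]
    unfold Ss
    simp [Gdiag' G hG]
  | succ k ih =>
    have e : (k+1)*(3*(k+1)-1) = k*(3*k-1) + 6*k + 2 := by
      rcases k with _|y
      · norm_num
      · rw [show 3*(y+1)-1 = 3*y+2 from by omega, show 3*(y+1+1)-1 = 3*y+5 from by omega]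
        ring
    have e2 : k*(3*k-1) + 2*k = k*(k+1) + 2*(k*k) := by
      rcases k with _|y
      · norm_num
      · rw [show 3*(y+1)-1 = 3*y+2 from by omega]; ring
    have h2 : 2 ∣ k*(k+1) := (Nat.even_mul_succ_self k).two_dvd
    have hexp : (k+1)*(3*(k+1)-1)/2 = k*(3*k-1)/2 + (3*k+1) := by omega
    rw [hexp, show 3*(k+1) = 3*k+3 from by ring, key (3*k), ih, pow_add]
    ring

theorem gauss_alternating_sum_three_k
    (G : ℕ → ℕ → Polynomial ℤ)
    (hG : ∀ m k : ℕ, k ≤ m →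
      G m k * ∏ i ∈ Finset.range k, (1 - (X : Polynomial ℤ) ^ (i + 1)) =
        ∏ i ∈ Finset.range k, (1 - (X : Polynomial ℤ) ^ (m - i)))
    (hG0 : ∀ m k : ℕ, m < k → G m k = 0)
    (k : ℕ) :
    ∑ i ∈ Finset.range (3 * k / 2 + 1),
        (-1 : Polynomial ℤ) ^ i * X ^ (i * (i - 1) / 2) * G (3 * k - i) i =
      (-1 : Polynomial ℤ) ^ k * X ^ (k * (3 * k - 1) / 2) := by
  have hsub : Finset.range (3*k/2+1) ⊆ Finset.range (3*k+1) := by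
    apply Finset.range_subset_range.mpr; omega
  have hext : ∑ i ∈ Finset.range (3 * k / 2 + 1),
      (-1 : Polynomial ℤ) ^ i * X ^ (i * (i - 1) / 2) * G (3 * k - i) i =
      ∑ i ∈ Finset.range (3 * k + 1),
      (-1 : Polynomial ℤ) ^ i * X ^ (i * (i - 1) / 2) * G (3 * k - i) i := by
    apply Finset.sum_subset hsub
    intro i hi hni
    simp only [Finset.mem_range] at hi hni
    rw [hG0 (3*k-i) i (by omega)]
    ring
  rw [hext]
  exact Sform G hG hG0 k
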